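/- Berezin–Lieb inequality (lower bound, finite dimensions): Let H be a Hermitian matrix on a finite-dimensional Hilbert space, {Ψ_σ}_{σ∈S} unit vectors with resolution of identity c ∫_S |Ψ_σ⟩⟨Ψ_σ| dμ(σ) = I. Then with ȟ(σ) = ⟨Ψ_σ, H Ψ_σ⟩ (the lower symbol), for every β > 0: c ∫_S e^{-β ȟ(σ)} dμ(σ) ≤ Tr(e^{-βH}). -/

import Mathlib

open MeasureTheory Matrix

private lemma quad_form_diag {n : ℕ} (V : Matrix (Fin n) (Fin n) ℂ) (d : Fin n → ℂ)
    (ψ : Fin n → ℂ) :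
    star ψ ⬝ᵥ (V * diagonal d * star V) *ᵥ ψ
      = ∑ i, d i * (Complex.normSq ((star V *ᵥ ψ) i) : ℂ) := by
  rw [← mulVec_mulVec, ← mulVec_mulVec, dotProduct_mulVec]
  have h : star ψ ᵥ* V = star (star V *ᵥ ψ) := by
    rw [star_mulVec, star_eq_conjTranspose, conjTranspose_conjTranspose]
  rw [h]
  set φ := star V *ᵥ ψ
  simp only [dotProduct, mulVec_diagonal, Pi.star_apply]
  refine Finset.sum_congr rfl fun i _ => ?_
  calc star (φ i) * (d i * φ i) = d i * (φ i * (starRingEnd ℂ) (φ i)) := by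
        rw [Complex.star_def]; ring
    _ = d i * (Complex.normSq (φ i) : ℂ) := by rw [Complex.mul_conj]

/-- **Berezin–Lieb inequality (lower bound)** -/
theorem berezin_lieb_lower {n : ℕ} {S : Type*} [MeasurableSpace S] (μ : Measure S)
    [SigmaFinite μ] (Ψ : S → (Fin n → ℂ)) (hΨ : ∀ σ, star (Ψ σ) ⬝ᵥ Ψ σ = 1)
    (c : ℝ) (hc : 0 < c)
    (hres : ∀ ψ : Fin n → ℂ, c * ∫ σ, ‖star (Ψ σ) ⬝ᵥ ψ‖ ^ 2 ∂μ =
      (star ψ ⬝ᵥ ψ).re)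
    (H : Matrix (Fin n) (Fin n) ℂ) (hH : H.IsHermitian) (β : ℝ) (hβ : 0 < β)
    (hint : Integrable (fun σ => Real.exp (-β * (star (Ψ σ) ⬝ᵥ H.mulVec (Ψ σ)).re)) μ) :
    c * ∫ σ, Real.exp (-β * (star (Ψ σ) ⬝ᵥ H.mulVec (Ψ σ)).re) ∂μ ≤
      (Matrix.trace (NormedSpace.exp ((-β : ℂ) • H))).re := by
  classical
  set V : Matrix (Fin n) (Fin n) ℂ := (hH.eigenvectorUnitary : Matrix (Fin n) (Fin n) ℂ) with hVdef
  set lam : Fin n → ℝ := hH.eigenvalues with hlamdef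
  have hmem := hH.eigenvectorUnitary.2
  have hV1 : V * star V = 1 := Unitary.mul_star_self_of_mem hmem
  have hV2 : star V * V = 1 := Unitary.star_mul_self_of_mem hmem
  have hVinv : V⁻¹ = star V := inv_eq_left_inv hV2
  have hofReal : (RCLike.ofReal ∘ lam : Fin n → ℂ) = fun i => (lam i : ℂ) := rfl
  have hspec : H = V * diagonal (fun i => (lam i : ℂ)) * star V := by
    rw [← hofReal]; exact hH.spectral_theorem
  -- exponential of the matrix
  have hexp : NormedSpace.exp ((-β : ℂ) • H)
      = V * diagonal (fun i => Complex.exp (-(β : ℂ) * lam i)) * star V := by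
    have hU : IsUnit V := ⟨Unitary.toUnits hH.eigenvectorUnitary, rfl⟩
    have h1 : (-β : ℂ) • H = V * diagonal (fun i => (-(β : ℂ) * lam i)) * V⁻¹ := by
      rw [hVinv, hspec, ← Matrix.smul_mul, ← Matrix.mul_smul]
      congr 2
      rw [← diagonal_smul]
      congr 1
    have h3 : NormedSpace.exp (fun i => (-(β : ℂ) * (lam i : ℂ)))
        = fun i => Complex.exp (-(β : ℂ) * lam i) := by
      rw [Pi.exp_def]
      funext i
      exact (congrFun Complex.exp_eq_exp_ℂ _).symm
    rw [h1, Matrix.exp_conj V _ hU, Matrix.exp_diagonal, h3, hVinv]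
  -- trace
  have htrace : (Matrix.trace (NormedSpace.exp ((-β : ℂ) • H))).re
      = ∑ i, Real.exp (-β * lam i) := by
    rw [hexp, Matrix.trace_mul_cycle, hV2, Matrix.one_mul, Matrix.trace_diagonal]
    rw [Complex.re_sum]
    refine Finset.sum_congr rfl fun i _ => ?_
    have h2 : (-(β : ℂ)) * (lam i : ℂ) = ((-β * lam i : ℝ) : ℂ) := by push_cast; ring
    rw [h2, ← Complex.ofReal_exp, Complex.ofReal_re]
  -- weights
  set w : Fin n → S → ℝ := fun i σ => Complex.normSq ((star V *ᵥ Ψ σ) i) with hwdef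
  set e : Fin n → (Fin n → ℂ) := fun i j => V j i with hedef
  have hw_eq : ∀ i σ, w i σ = ‖star (Ψ σ) ⬝ᵥ e i‖ ^ 2 := by
    intro i σ
    have h1 : (star V *ᵥ Ψ σ) i = star (e i) ⬝ᵥ Ψ σ := by
      simp [mulVec, dotProduct, hedef, star_eq_conjTranspose, conjTranspose_apply]
    have h2 : star (e i) ⬝ᵥ Ψ σ = (starRingEnd ℂ) (star (Ψ σ) ⬝ᵥ e i) := by
      simp [dotProduct, map_sum, mul_comm]
    rw [hwdef]
    simp only [h1, h2, Complex.sq_norm, Complex.normSq_conj]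
  have he_norm : ∀ i, (star (e i) ⬝ᵥ e i).re = 1 := by
    intro i
    have h1 : (star V * V) i i = star (e i) ⬝ᵥ e i := by
      simp [Matrix.mul_apply, dotProduct, hedef, star_eq_conjTranspose, conjTranspose_apply]
    rw [← h1, hV2]
    simp
  -- integrability of weights
  have hw_int : ∀ i, Integrable (w i) μ := by
    intro i
    have h0 : Integrable (fun σ => ‖star (Ψ σ) ⬝ᵥ e i‖ ^ 2) μ := by
      by_contra h
      have h1 := hres (e i)
      rw [integral_undef h, mul_zero, he_norm i] at h1
      norm_num at h1
    exact h0.congr (Filter.Eventually.of_forall fun σ => (hw_eq i σ).symm)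
  have hw_integral : ∀ i, c * ∫ σ, w i σ ∂μ = 1 := by
    intro i
    have h1 : ∫ σ, w i σ ∂μ = ∫ σ, ‖star (Ψ σ) ⬝ᵥ e i‖ ^ 2 ∂μ :=
      integral_congr_ae (Filter.Eventually.of_forall fun σ => hw_eq i σ)
    rw [h1, hres (e i), he_norm i]
  -- per-point facts
  have hw_nonneg : ∀ i σ, 0 ≤ w i σ := fun i σ => Complex.normSq_nonneg _
  have hw_sum : ∀ σ, ∑ i, w i σ = 1 := by
    intro σ
    have h := quad_form_diag V (fun _ => (1 : ℂ)) (Ψ σ)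
    rw [diagonal_one, Matrix.mul_one, hV1, Matrix.one_mulVec, hΨ σ] at h
    simp only [one_mul] at h
    have h2 : ((∑ i, w i σ : ℝ) : ℂ) = 1 := by push_cast; exact h.symm
    exact_mod_cast h2
  have hh_re : ∀ σ, (star (Ψ σ) ⬝ᵥ H.mulVec (Ψ σ)).re = ∑ i, lam i * w i σ := by
    intro σ
    have h := quad_form_diag V (fun i => (lam i : ℂ)) (Ψ σ)
    rw [← hspec] at h
    rw [show H.mulVec (Ψ σ) = H *ᵥ Ψ σ from rfl, h, Complex.re_sum]
    refine Finset.sum_congr rfl fun i _ => ?_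
    rw [← Complex.ofReal_mul, Complex.ofReal_re]
  -- Jensen pointwise
  have hjensen : ∀ σ, Real.exp (-β * (star (Ψ σ) ⬝ᵥ H.mulVec (Ψ σ)).re)
      ≤ ∑ i, Real.exp (-β * lam i) * w i σ := by
    intro σ
    have h1 : -β * (star (Ψ σ) ⬝ᵥ H.mulVec (Ψ σ)).re
        = ∑ i, w i σ • (-β * lam i) := by
      rw [hh_re σ, Finset.mul_sum]
      refine Finset.sum_congr rfl fun i _ => ?_
      simp only [smul_eq_mul]; ring
    calc Real.exp (-β * (star (Ψ σ) ⬝ᵥ H.mulVec (Ψ σ)).re)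
        = Real.exp (∑ i, w i σ • (-β * lam i)) := by rw [h1]
      _ ≤ ∑ i, w i σ • Real.exp (-β * lam i) :=
          convexOn_exp.map_sum_le (fun i _ => hw_nonneg i σ) (hw_sum σ)
            (fun i _ => Set.mem_univ _)
      _ = ∑ i, Real.exp (-β * lam i) * w i σ := by
          refine Finset.sum_congr rfl fun i _ => ?_
          simp only [smul_eq_mul]; ring
  -- integrate
  have hg_int : Integrable (fun σ => ∑ i, Real.exp (-β * lam i) * w i σ) μ :=
    integrable_finset_sum _ fun i _ => (hw_int i).const_mul _
  have hmono : ∫ σ, Real.exp (-β * (star (Ψ σ) ⬝ᵥ H.mulVec (Ψ σ)).re) ∂μ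
      ≤ ∫ σ, ∑ i, Real.exp (-β * lam i) * w i σ ∂μ :=
    integral_mono hint hg_int hjensen
  have hfinal : c * ∫ σ, ∑ i, Real.exp (-β * lam i) * w i σ ∂μ
      = ∑ i, Real.exp (-β * lam i) := by
    rw [integral_finset_sum _ fun i _ => (hw_int i).const_mul _, Finset.mul_sum]
    refine Finset.sum_congr rfl fun i _ => ?_
    rw [integral_const_mul, ← mul_assoc, mul_comm c, mul_assoc, hw_integral i, mul_one]
  rw [htrace, ← hfinal]
  exact mul_le_mul_of_nonneg_left hmono hc.le
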